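/- Let u = 1^a 2^b with a, b ≥ 2. Suppose the word w u-represents the labeled graph G = ([n], E), and let ij be an edge of G with i < j. Then the word w' = i^a j^b 12...n 12...n w u-represents the graph G' = ([n], E \ {ij}). -/

import Mathlib

/-- `red w` replaces each occurrence of the `i`-th smallest letter of `w` by `i`. -/
def red (w : List ℕ) : List ℕ :=
  w.map (fun x => (w.toFinset.filter (· < x)).card + 1)

/-- `w` has a `u`-match (starting at some position `i`): a factor of `w` of length `|u|`
whose reduction equals `red u` (which is `u` itself when `red u = u`). -/
def HasMatch (u w : List ℕ) : Prop :=
  ∃ i, i + u.length ≤ w.length ∧ red ((w.drop i).take u.length) = red u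

/-- The word `w` `u`-represents the labeled graph with vertex set `V` and adjacency `E`:
the letters occurring in `w` are exactly `V`, and two distinct vertices are adjacent
iff `w` restricted to these two letters has no `u`-match. -/
def Represents (u w : List ℕ) (V : Finset ℕ) (E : ℕ → ℕ → Prop) : Prop :=
  (∀ x, x ∈ w ↔ x ∈ V) ∧
  ∀ x ∈ V, ∀ y ∈ V, x ≠ y →
    (E x y ↔ ¬ HasMatch u (w.filter (fun z => z = x ∨ z = y)))

lemma red_two_block {x y : ℕ} (hxy : x < y) {a b : ℕ} (ha : 0 < a) (hb : 0 < b) :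
    red (List.replicate a x ++ List.replicate b y) = List.replicate a 1 ++ List.replicate b 2 := by
  unfold red
  have htf : (List.replicate a x ++ List.replicate b y).toFinset = {x, y} := by
    ext z
    simp [List.mem_replicate, ha.ne', hb.ne']
  rw [htf]
  have h1 : ({x, y} : Finset ℕ).filter (· < x) = ∅ := by
    ext z; simp; omega
  have h2 : ({x, y} : Finset ℕ).filter (· < y) = {x} := by
    ext z; simp; omega
  simp [h1, h2]

lemma red_eq_two_block {x y : ℕ} (hxy : x < y) {a b : ℕ} (ha : 0 < a) (hb : 0 < b)
    {f : List ℕ} (hf : ∀ z ∈ f, z = x ∨ z = y) (hlen : f.length = a + b)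
    (h : red f = List.replicate a 1 ++ List.replicate b 2) :
    f = List.replicate a x ++ List.replicate b y := by
  -- first, x and y both occur in f
  have h2mem : (2 : ℕ) ∈ red f := by
    rw [h]
    simp [List.mem_replicate, hb.ne']
  obtain ⟨v, hvf, hv2⟩ := List.mem_map.1 h2mem
  have hcard : (f.toFinset.filter (· < v)).card = 1 := by omega
  obtain ⟨u0, hu0⟩ := Finset.card_eq_one.1 hcard
  have hu0f : u0 ∈ f.toFinset ∧ u0 < v := by
    have : u0 ∈ f.toFinset.filter (· < v) := by rw [hu0]; simp
    simpa using this
  have hu0mem : u0 ∈ f := List.mem_toFinset.1 hu0f.1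
  have hu0xy := hf u0 hu0mem
  have hvxy := hf v hvf
  have hux : u0 = x := by rcases hu0xy with h'|h' <;> rcases hvxy with h''|h'' <;> omega
  have hvy : v = y := by rcases hu0xy with h'|h' <;> rcases hvxy with h''|h'' <;> omega
  have hxf : x ∈ f := hux ▸ hu0mem
  have hyf : y ∈ f := hvy ▸ hvf
  -- the filter values
  have hfx : f.toFinset.filter (· < x) = ∅ := by
    ext z
    simp only [Finset.mem_filter, List.mem_toFinset, Finset.notMem_empty, iff_false, not_and]
    intro hz
    rcases hf z hz with h'|h' <;> omega
  have hfy : f.toFinset.filter (· < y) = {x} := by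
    ext z
    simp only [Finset.mem_filter, List.mem_toFinset, Finset.mem_singleton]
    constructor
    · rintro ⟨hz, hzy⟩
      rcases hf z hz with h'|h' <;> omega
    · rintro rfl
      exact ⟨hxf, hxy⟩
  -- pointwise
  apply List.ext_getElem (by simp [hlen])
  intro k h1 h2
  have hk : k < a + b := by omega
  have hval := congrArg (fun l => l[k]?) h
  simp only [red, List.getElem?_map, List.getElem?_eq_getElem h1, Option.map_some] at hval
  have hmem := hf (f[k]'h1) (List.getElem_mem h1)
  rcases Nat.lt_or_ge k a with hka | hka
  · have hRHS : (List.replicate a x ++ List.replicate b y)[k]'h2 = x := by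
      rw [List.getElem_append_left (by simpa using hka)]; simp
    rw [hRHS]
    rcases hmem with hm | hm
    · exact hm
    · exfalso
      rw [hm, hfy] at hval
      rw [List.getElem?_append_left (by simpa using hka)] at hval
      simp [hka] at hval
  · have hkb : k - a < b := by omega
    have hRHS : (List.replicate a x ++ List.replicate b y)[k]'h2 = y := by
      rw [List.getElem_append_right (by simpa using hka)]; simp
    rw [hRHS]
    rcases hmem with hm | hm
    · exfalso
      rw [hm, hfx] at hval
      rw [List.getElem?_append_right (by simpa using hka)] at hval
      simp [hkb] at hval
    · exact hm

lemma hasMatch_iff {x y : ℕ} (hxy : x < y) {a b : ℕ} (ha : 0 < a) (hb : 0 < b)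
    {v : List ℕ} (hv : ∀ z ∈ v, z = x ∨ z = y) :
    HasMatch (List.replicate a 1 ++ List.replicate b 2) v ↔
      ∃ i, i + (a + b) ≤ v.length ∧
        (v.drop i).take (a + b) = List.replicate a x ++ List.replicate b y := by
  have hlu : (List.replicate a 1 ++ List.replicate b 2).length = a + b := by simp
  unfold HasMatch
  simp only [hlu]
  constructor
  · rintro ⟨i, hle, hred⟩
    refine ⟨i, hle, ?_⟩
    apply red_eq_two_block hxy ha hb
    · intro z hz
      exact hv z (List.mem_of_mem_drop (List.mem_of_mem_take hz))
    · simp only [List.length_take, List.length_drop]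
      omega
    · rw [hred, red_two_block (by norm_num) ha hb]
  · rintro ⟨i, hle, hfac⟩
    exact ⟨i, hle, by
      rw [hfac, red_two_block hxy ha hb, red_two_block (by norm_num) ha hb]⟩

lemma crossing {x y z : ℕ} (hxy : x < y) (hz : z = x ∨ z = y) {a b : ℕ}
    (ha : 2 ≤ a) (hb : 2 ≤ b) {c : ℕ} {t : List ℕ} (ht : ∀ s ∈ t, s = x ∨ s = y) :
    HasMatch (List.replicate a 1 ++ List.replicate b 2)
      (List.replicate c z ++ (x :: y :: x :: y :: t)) ↔
    HasMatch (List.replicate a 1 ++ List.replicate b 2) t := by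
  set v := List.replicate c z ++ (x :: y :: x :: y :: t) with hvdef
  have hvmem : ∀ s ∈ v, s = x ∨ s = y := by
    intro s hs
    rw [hvdef] at hs
    rcases List.mem_append.1 hs with h | h
    · rcases hz with rfl|rfl
      · exact Or.inl (List.eq_of_mem_replicate h)
      · exact Or.inr (List.eq_of_mem_replicate h)
    · simp only [List.mem_cons] at h
      rcases h with rfl|rfl|rfl|rfl|h
      · exact Or.inl rfl
      · exact Or.inr rfl
      · exact Or.inl rfl
      · exact Or.inr rfl
      · exact ht _ h
  have hlenv : v.length = c + 4 + t.length := by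
    rw [hvdef]; simp; omega
  -- getElem! values
  have hBz : ∀ k, k < c → v[k]! = z := by
    intro k hk
    rw [hvdef, getElem!_pos _ k (by
        simp only [List.length_append, List.length_replicate, List.length_cons]; omega),
      List.getElem_append_left (by simpa using hk)]
    simp
  have hkey : ∀ d, d < 4 + t.length → v[c + d]! = (x :: y :: x :: y :: t)[d]! := by
    intro d hd
    rw [hvdef, getElem!_pos _ (c+d) (by
        simp only [List.length_append, List.length_replicate, List.length_cons]; omega),
      getElem!_pos _ d (by simp only [List.length_cons]; omega),
      List.getElem_append_right (by simp)]
    simp only [List.length_replicate, Nat.add_sub_cancel_left]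
  have hB0 : v[c]! = x := by have := hkey 0 (by omega); simpa using this
  have hB1 : v[c+1]! = y := by have := hkey 1 (by omega); simpa using this
  have hB2 : v[c+2]! = x := by have := hkey 2 (by omega); simpa using this
  have hB3 : v[c+3]! = y := by have := hkey 3 (by omega); simpa using this
  rw [hasMatch_iff hxy (by omega) (by omega) hvmem,
    hasMatch_iff hxy (by omega) (by omega) ht]
  have hPlen : (List.replicate c z ++ [x, y, x, y]).length = c + 4 := by simp
  have hvP : v = (List.replicate c z ++ [x, y, x, y]) ++ t := by
    rw [hvdef]; simp
  constructor
  · rintro ⟨i, hle, hfac⟩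
    -- pointwise facts about the factor
    have hfx : ∀ k, k < a → v[i + k]! = x := by
      intro k hk
      have h1 : k < ((v.drop i).take (a+b)).length := by
        simp only [List.length_take, List.length_drop]; omega
      have h2 := List.getElem_of_eq hfac h1
      rw [getElem!_pos v (i+k) (by omega)]
      simp only [List.getElem_take, List.getElem_drop] at h2
      rw [h2, List.getElem_append_left (by simpa using hk)]
      simp
    have hfy : ∀ k, k < b → v[i + (a + k)]! = y := by
      intro k hk
      have h1 : a + k < ((v.drop i).take (a+b)).length := by
        simp only [List.length_take, List.length_drop]; omega
      have h2 := List.getElem_of_eq hfac h1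
      rw [getElem!_pos v (i+(a+k)) (by omega)]
      simp only [List.getElem_take, List.getElem_drop] at h2
      rw [h2, List.getElem_append_right (by simp)]
      simp
    have hige : c + 4 ≤ i := by
      by_contra hic
      push_neg at hic
      rcases Nat.lt_or_ge (i + a + b) (c + 5) with hcase | hcase
      · -- factor inside the prefix region
        have e1 : v[i + (a + 1)]! = y := hfy 1 (by omega)
        have e0 : v[i + (a + 0)]! = y := hfy 0 (by omega)
        have e1' : v[i + a + 1]! = y := by
          rw [show i + a + 1 = i + (a + 1) by omega]; exact e1
        have e0' : v[i + a]! = y := by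
          rw [show i + a = i + (a + 0) by omega]; exact e0
        rcases Nat.lt_or_ge (i + a + 1) c with hq | hq
        · have g1 : v[i + 1]! = x := hfx 1 (by omega)
          have g1' : v[i + 1]! = z := hBz (i+1) (by omega)
          have g0' : v[i + a]! = z := hBz (i+a) (by omega)
          omega
        · rcases (by omega : i + a + 1 = c ∨ i + a + 1 = c + 1 ∨ i + a + 1 = c + 2 ∨
              i + a + 1 = c + 3) with h | h | h | h
          · rw [h] at e1'; omega
          · have hc : i + a = c := by omega
            rw [hc] at e0'; omega
          · rw [h] at e1'; omega
          · have hc : i + a = c + 2 := by omega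
            rw [hc] at e0'; omega
      · -- factor reaches into t : look at positions c+1, c+2, c+3
        rcases Nat.lt_or_ge (c + 3) (i + a) with hc3 | hc3
        · have := hfx (c + 3 - i) (by omega)
          rw [show i + (c + 3 - i) = c + 3 by omega] at this
          omega
        · rcases Nat.eq_or_lt_of_le (Nat.le_of_lt_succ (by omega : i < c + 4)) with hi3 | hi3
          · -- i = c + 3
            have := hfx 0 (by omega)
            rw [show i + 0 = c + 3 by omega] at this
            omega
          · rcases Nat.lt_or_ge (i + a) (c + 3) with hia | hia
            · -- c + 2 is in the y-block
              have := hfy (c + 2 - (i + a)) (by omega)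
              rw [show i + (a + (c + 2 - (i + a))) = c + 2 by omega] at this
              omega
            · -- i + a = c + 3, so c+1 is in the x-block
              have hia3 : i + a = c + 3 := by omega
              have := hfx (c + 1 - i) (by omega)
              rw [show i + (c + 1 - i) = c + 1 by omega] at this
              omega
    -- now produce the match inside t
    refine ⟨i - (c + 4), by omega, ?_⟩
    have hdrop : v.drop i = t.drop (i - (c + 4)) := by
      have h4 : (List.replicate c z ++ [x, y, x, y]).length + (i - (c + 4)) = i := by
        rw [hPlen]; omega
      calc v.drop i
          = ((List.replicate c z ++ [x, y, x, y]) ++ t).drop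
              ((List.replicate c z ++ [x, y, x, y]).length + (i - (c + 4))) := by
            rw [hvP, h4]
        _ = t.drop (i - (c + 4)) := List.drop_length_add_append _
    rw [← hdrop]
    exact hfac
  · rintro ⟨p, hle, hfac⟩
    refine ⟨c + 4 + p, by omega, ?_⟩
    have hdrop : v.drop (c + 4 + p) = t.drop p := by
      calc v.drop (c + 4 + p)
          = ((List.replicate c z ++ [x, y, x, y]) ++ t).drop
              ((List.replicate c z ++ [x, y, x, y]).length + p) := by
            rw [hvP, hPlen]
        _ = t.drop p := List.drop_length_add_append _
    rw [hdrop]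
    exact hfac

lemma sorted_two {x y : ℕ} (hxy : x < y) {l : List ℕ} (hp : List.Pairwise (· < ·) l)
    (hmem : ∀ z, z ∈ l ↔ z = x ∨ z = y) : l = [x, y] := by
  match l, hp with
  | [], _ =>
    have := (hmem x).2 (Or.inl rfl); simp at this
  | [u0], _ =>
    have h1 := (hmem x).2 (Or.inl rfl)
    have h2 := (hmem y).2 (Or.inr rfl)
    simp at h1 h2
    omega
  | u0 :: v0 :: r, hp =>
    have hu : u0 = x ∨ u0 = y := (hmem u0).1 (by simp)
    have hv : v0 = x ∨ v0 = y := (hmem v0).1 (by simp)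
    have huv : u0 < v0 := (List.pairwise_cons.1 hp).1 v0 (by simp)
    have hux : u0 = x := by rcases hu with h|h <;> rcases hv with h'|h' <;> omega
    have hvy : v0 = y := by rcases hu with h|h <;> rcases hv with h'|h' <;> omega
    have hr : r = [] := by
      rcases r with _ | ⟨s, r'⟩
      · rfl
      · exfalso
        have hs : s = x ∨ s = y := (hmem s).1 (by simp)
        have h1 : u0 < s := (List.pairwise_cons.1 hp).1 s (by simp)
        have h2 : v0 < s := (List.pairwise_cons.1 (List.pairwise_cons.1 hp).2).1 s (by simp)
        rcases hs with h|h <;> omega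
    rw [hux, hvy, hr]

lemma filter_range'_two {x y n : ℕ} (hxy : x < y) (hx : 1 ≤ x) (hyn : y ≤ n) :
    (List.range' 1 n).filter (fun z => decide (z = x ∨ z = y)) = [x, y] := by
  apply sorted_two hxy
  · exact List.Pairwise.sublist List.filter_sublist (List.pairwise_lt_range' (s := 1) (n := n))
  · intro z
    simp only [List.mem_filter, List.mem_range'_1, decide_eq_true_eq]
    omega

theorem remove_edge_case_1122 (a b n : ℕ) (ha : 2 ≤ a) (hb : 2 ≤ b)
    (E : ℕ → ℕ → Prop) (hsym : Symmetric E) (hirr : ∀ x, ¬ E x x)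
    (w : List ℕ)
    (hw : Represents (List.replicate a 1 ++ List.replicate b 2) w (Finset.Icc 1 n) E)
    (i j : ℕ) (hi : i ∈ Finset.Icc 1 n) (hj : j ∈ Finset.Icc 1 n) (hij : i < j)
    (he : E i j) :
    Represents (List.replicate a 1 ++ List.replicate b 2)
      (List.replicate a i ++ List.replicate b j ++
        List.range' 1 n ++ List.range' 1 n ++ w)
      (Finset.Icc 1 n)
      (fun x y => E x y ∧ ¬ ((x = i ∧ y = j) ∨ (x = j ∧ y = i))) := by
  obtain ⟨hw1, hw2⟩ := hw
  rw [Finset.mem_Icc] at hi hj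
  set w' : List ℕ := List.replicate a i ++ List.replicate b j ++
      List.range' 1 n ++ List.range' 1 n ++ w with hw'def
  -- the key two-letter analysis, for x < y
  have main : ∀ x y : ℕ, 1 ≤ x → x ≤ n → 1 ≤ y → y ≤ n → x < y →
      ((E x y ∧ ¬ ((x = i ∧ y = j) ∨ (x = j ∧ y = i))) ↔
        ¬ HasMatch (List.replicate a 1 ++ List.replicate b 2)
          (w'.filter (fun z => z = x ∨ z = y))) := by
    intro x y hx1 hxn hy1 hyn hxy
    have hR : (List.range' 1 n).filter (fun z => decide (z = x ∨ z = y)) = [x, y] :=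
      filter_range'_two hxy hx1 hyn
    have htmem : ∀ s ∈ w.filter (fun z => decide (z = x ∨ z = y)), s = x ∨ s = y := by
      intro s hs
      simpa using (List.mem_filter.1 hs).2
    by_cases hA : x = i ∧ y = j
    · obtain ⟨rfl, rfl⟩ := hA
      have hfeq : w'.filter (fun z => decide (z = x ∨ z = y)) =
          (List.replicate a x ++ List.replicate b y) ++
            (x :: y :: x :: y :: w.filter (fun z => decide (z = x ∨ z = y))) := by
        rw [hw'def]
        simp only [List.filter_append, hR]
        rw [List.filter_replicate_of_pos (by simp), List.filter_replicate_of_pos (by simp)]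
        simp
      have hmatch : HasMatch (List.replicate a 1 ++ List.replicate b 2)
          (w'.filter (fun z => z = x ∨ z = y)) := by
        rw [hfeq]
        rw [hasMatch_iff hxy (by omega) (by omega) (by
          intro s hs
          rcases List.mem_append.1 hs with h | h
          · rcases List.mem_append.1 h with h'|h'
            · exact Or.inl (List.eq_of_mem_replicate h')
            · exact Or.inr (List.eq_of_mem_replicate h')
          · simp only [List.mem_cons] at h
            rcases h with rfl|rfl|rfl|rfl|h
            · exact Or.inl rfl
            · exact Or.inr rfl
            · exact Or.inl rfl
            · exact Or.inr rfl
            · exact htmem _ h)]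
        refine ⟨0, by
          simp only [List.length_append, List.length_replicate, List.length_cons,
            Nat.zero_add]
          omega, ?_⟩
        rw [List.drop_zero, List.take_left' (by simp)]
      apply iff_of_false
      · rintro ⟨-, hno⟩; exact hno (Or.inl ⟨rfl, rfl⟩)
      · exact fun hn => hn hmatch
    · have hexcl : ¬ ((x = i ∧ y = j) ∨ (x = j ∧ y = i)) := by
        rintro (⟨rfl, rfl⟩ | ⟨rfl, rfl⟩)
        · exact hA ⟨rfl, rfl⟩
        · omega
      obtain ⟨c, z, hzxy, hfeq⟩ : ∃ c z, (z = x ∨ z = y) ∧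
          w'.filter (fun z => decide (z = x ∨ z = y)) =
            List.replicate c z ++
              (x :: y :: x :: y :: w.filter (fun z => decide (z = x ∨ z = y))) := by
        by_cases hpi : i = x ∨ i = y
        · by_cases hpj : j = x ∨ j = y
          · exfalso
            apply hA
            rcases hpi with h|h <;> rcases hpj with h'|h' <;> exact ⟨by omega, by omega⟩
          · refine ⟨a, i, hpi, ?_⟩
            rw [hw'def]
            simp only [List.filter_append, hR]
            rw [List.filter_replicate_of_pos (by simpa using hpi),
              List.filter_replicate_of_neg (by simpa using hpj)]
            simp
        · by_cases hpj : j = x ∨ j = y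
          · refine ⟨b, j, hpj, ?_⟩
            rw [hw'def]
            simp only [List.filter_append, hR]
            rw [List.filter_replicate_of_neg (by simpa using hpi),
              List.filter_replicate_of_pos (by simpa using hpj)]
            simp
          · refine ⟨0, x, Or.inl rfl, ?_⟩
            rw [hw'def]
            simp only [List.filter_append, hR]
            rw [List.filter_replicate_of_neg (by simpa using hpi),
              List.filter_replicate_of_neg (by simpa using hpj)]
            simp
      rw [hfeq, crossing hxy hzxy ha hb htmem]
      have hEiff := hw2 x (Finset.mem_Icc.2 ⟨hx1, hxn⟩) y (Finset.mem_Icc.2 ⟨hy1, hyn⟩)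
        (Nat.ne_of_lt hxy)
      constructor
      · rintro ⟨h1, -⟩
        exact hEiff.1 h1
      · intro h
        exact ⟨hEiff.2 h, hexcl⟩
  constructor
  · intro x
    rw [hw'def]
    simp only [List.mem_append, List.mem_replicate, List.mem_range'_1, hw1, Finset.mem_Icc]
    omega
  · intro x hx y hy hxy
    rw [Finset.mem_Icc] at hx hy
    rcases Nat.lt_trichotomy x y with h | h | h
    · exact main x y hx.1 hx.2 hy.1 hy.2 h
    · omega
    · have hm := main y x hy.1 hy.2 hx.1 hx.2 h
      have hfe : w'.filter (fun z => decide (z = x ∨ z = y)) =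
          w'.filter (fun z => decide (z = y ∨ z = x)) := by
        apply List.filter_congr
        intro s _
        simp only [decide_eq_decide]
        tauto
      rw [hfe, ← hm]
      constructor
      · rintro ⟨h1, h2⟩
        exact ⟨hsym h1, fun hc => h2 (by tauto)⟩
      · rintro ⟨h1, h2⟩
        exact ⟨hsym h1, fun hc => h2 (by tauto)⟩
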